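/- Let $R$ be a commutative ring, $H$ a finite set of cardinality $2g$ with a fixed-point-free involution $c : H \to H$, and $x : H \to R$ any function. For $\Psi \subseteq H$ set $D(\Psi) := \prod (x(\tau) - x(\tau'))^2$, the product over unordered pairs $\{\tau, \tau'\}$ of distinct elements of $\Psi$ (well defined since the factors are squares). Call $\Phi \subseteq H$ a CM-type if $\Phi \cap c(\Phi) = \emptyset$ and $\Phi \cup c(\Phi) = H$. Let $\varphi \subseteq H$ satisfy $\varphi \cap c(\varphi) = \emptyset$ and set $k := g - |\varphi|$; assume $k \geq 1$. Let $\Phi_1$ be any CM-type and put $P := \prod_{\tau \in \Phi_1} (x(\tau) - x(c\tau))^2$ and $P_{\varphi} := \prod_{\tau \in \varphi} (x(\tau) - x(c\tau))^2$. Then $$\Big(\prod_{\substack{\Phi \text{ CM-type} \\ \varphi \subseteq \Phi}} D(\Phi)\, D(c\Phi)\Big) \cdot P^{\,2^{k-1}} \cdot D(\varphi \cup c\varphi)^{\,2^{k-1}} \;=\; D(H)^{\,2^{k-1}} \cdot P_{\varphi}^{\,2^{k-1}} \cdot \big(D(\varphi)\, D(c\varphi)\big)^{\,2^{k}}.$$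 (The left-hand factor $P$ does not depend on the choice of CM-type $\Phi_1$, since each factor $(x(\tau)-x(c\tau))^2$ is unchanged when $\tau$ is replaced by $c\tau$.) -/
import Mathlib

/-- The symmetric function `(a, b) ↦ (x a - x b)^2` descended to unordered pairs. -/
def sqDiff {H R : Type*} [CommRing R] (x : H → R) : Sym2 H → R :=
  Sym2.lift ⟨fun a b => (x a - x b) ^ 2, fun a b => by ring⟩

/-- `D(Ψ) = ∏ (x τ - x τ')²`, the product over unordered pairs of distinct
elements of `Ψ` (well defined since the factors are squares). -/
def discProd {H R : Type*} [DecidableEq H] [CommRing R] (x : H → R) (Ψ : Finset H) : R :=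
  ∏ s ∈ Ψ.sym2.filter (fun s => ¬ s.IsDiag), sqDiff x s

private lemma sqDiff_mk {H R : Type*} [CommRing R] (x : H → R) (a b : H) :
    sqDiff x s(a, b) = (x a - x b) ^ 2 := rfl

private lemma discProd_insert {H R : Type*} [DecidableEq H] [CommRing R] (x : H → R) {a : H}
    {Ψ : Finset H} (ha : a ∉ Ψ) :
    discProd x (insert a Ψ) = (∏ b ∈ Ψ, (x a - x b) ^ 2) * discProd x Ψ := by
  unfold discProd
  rw [Finset.sym2_insert, Finset.filter_union]
  have h1 : ((insert a Ψ).image fun b => s(a, b)).filter (fun s => ¬ s.IsDiag)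
      = Ψ.image fun b => s(a, b) := by
    ext s
    simp only [Finset.mem_filter, Finset.mem_image, Finset.mem_insert]
    constructor
    · rintro ⟨⟨b, hb | hb, rfl⟩, hd⟩
      · exact absurd (by simp [hb]) hd
      · exact ⟨b, hb, rfl⟩
    · rintro ⟨b, hb, rfl⟩
      refine ⟨⟨b, Or.inr hb, rfl⟩, ?_⟩
      simp only [Sym2.isDiag_iff_proj_eq]
      rintro rfl; exact ha hb
  rw [h1, Finset.prod_union]
  · congr 1
    rw [Finset.prod_image ?_]
    · exact Finset.prod_congr rfl fun b _ => rfl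
    · intro b hb b' hb' h
      rcases Sym2.eq_iff.mp h with ⟨-, h⟩ | ⟨h1, -⟩
      · exact h
      · exact absurd (h1 ▸ hb') ha
  · rw [Finset.disjoint_left]
    rintro s hs hs2
    obtain ⟨b, hb, rfl⟩ := Finset.mem_image.mp hs
    have := (Finset.mem_filter.mp hs2).1
    rw [Finset.mk_mem_sym2_iff] at this
    exact ha this.1

private lemma prod_transversal {H R : Type*} [DecidableEq H] [CommMonoid R] (c : H → H)
    (hinv : ∀ τ, c (c τ) = τ) (f : H → R) (hf : ∀ τ, f (c τ) = f τ)
    {Φ Ψ : Finset H} (hΦ : Φ ∩ Φ.image c = ∅) (hΨ : Ψ ∩ Ψ.image c = ∅)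
    (hU : Φ ∪ Φ.image c = Ψ ∪ Ψ.image c) : ∏ τ ∈ Φ, f τ = ∏ τ ∈ Ψ, f τ := by
  have key : ∀ {S T : Finset H}, S ∩ S.image c = ∅ → T ∩ T.image c = ∅ →
      S ∪ S.image c = T ∪ T.image c → ∀ a ∈ S, (if a ∈ T then a else c a) ∈ T := by
    intro S T hS hT hST a ha
    by_cases h : a ∈ T
    · simp [h]
    · simp only [h, if_false]
      have : a ∈ T ∪ T.image c := hST ▸ Finset.mem_union_left _ ha
      rcases Finset.mem_union.mp this with h' | h'
      · exact absurd h' h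
      · obtain ⟨b, hb, rfl⟩ := Finset.mem_image.mp h'
        rwa [hinv]
  have notmem : ∀ {S : Finset H}, S ∩ S.image c = ∅ → ∀ a ∈ S, c a ∉ S := by
    intro S hS a ha hca
    have : a ∈ S ∩ S.image c := Finset.mem_inter.mpr ⟨ha, Finset.mem_image.mpr ⟨c a, hca, hinv a⟩⟩
    simp [hS] at this
  refine Finset.prod_nbij' (fun a => if a ∈ Ψ then a else c a) (fun a => if a ∈ Φ then a else c a)
    (key hΦ hΨ hU) (key hΨ hΦ hU.symm) ?_ ?_ ?_
  · intro a ha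
    by_cases h : a ∈ Ψ
    · simp [h, ha]
    · simp only [h, if_false]
      have hca : c a ∉ Φ := notmem hΦ a ha
      simp [hca, hinv]
  · intro a ha
    by_cases h : a ∈ Φ
    · simp [h, ha]
    · simp only [h, if_false]
      have hca : c a ∉ Ψ := notmem hΨ a ha
      simp [hca, hinv]
  · intro a ha
    by_cases h : a ∈ Ψ
    · simp [h]
    · simp [h, hf]

private lemma map_discProd {H R S : Type*} [DecidableEq H] [CommRing R] [CommRing S]
    (f : R →+* S) (x : H → R) (Ψ : Finset H) :
    f (discProd x Ψ) = discProd (fun a => f (x a)) Ψ := by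
  unfold discProd
  rw [map_prod]
  refine Finset.prod_congr rfl fun s _ => ?_
  induction s using Sym2.ind with
  | _ a b => simp [sqDiff_mk, map_pow, map_sub]

private lemma map_discProd' {H R S : Type*} [DecidableEq H] [CommRing R] [CommRing S]
    [Algebra ℤ R] [Algebra ℤ S] (f : R →ₐ[ℤ] S) (x : H → R) (Ψ : Finset H) :
    f (discProd x Ψ) = discProd (fun a => f (x a)) Ψ :=
  map_discProd (f : R →+* S) x Ψ

private lemma key {H : Type*} [Fintype H] [DecidableEq H] {R : Type*} [CommRing R] [IsDomain R]
    (g : ℕ) (hcard : Fintype.card H = 2 * g)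
    (c : H → H) (hinv : ∀ τ, c (c τ) = τ) (hfree : ∀ τ, c τ ≠ τ)
    (x : H → R) (hx : ∀ τ τ' : H, τ ≠ τ' → x τ - x τ' ≠ 0) :
    ∀ k, 1 ≤ k → ∀ φ : Finset H, φ ∩ φ.image c = ∅ → k = g - φ.card →
    ∀ Φ₁ : Finset H, Φ₁ ∩ Φ₁.image c = ∅ ∧ Φ₁ ∪ Φ₁.image c = Finset.univ →
    (∏ Φ ∈ Finset.univ.filter (fun Φ : Finset H =>
          (Φ ∩ Φ.image c = ∅ ∧ Φ ∪ Φ.image c = Finset.univ) ∧ φ ⊆ Φ),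
        discProd x Φ * discProd x (Φ.image c))
      * (∏ τ ∈ Φ₁, (x τ - x (c τ)) ^ 2) ^ (2 ^ (k - 1))
      * (discProd x (φ ∪ φ.image c)) ^ (2 ^ (k - 1))
    = (discProd x Finset.univ) ^ (2 ^ (k - 1))
      * (∏ τ ∈ φ, (x τ - x (c τ)) ^ 2) ^ (2 ^ (k - 1))
      * (discProd x φ * discProd x (φ.image c)) ^ (2 ^ k) := by
  have hcinj : Function.Injective c := Function.LeftInverse.injective hinv
  have hCMcard : ∀ Φ : Finset H, Φ ∩ Φ.image c = ∅ → Φ ∪ Φ.image c = Finset.univ →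
      Φ.card = g := by
    intro Φ hi hu
    have h1 := congrArg Finset.card hu
    rw [Finset.card_union_of_disjoint (Finset.disjoint_iff_inter_eq_empty.mpr hi),
      Finset.card_univ, hcard, Finset.card_image_of_injective _ hcinj] at h1
    omega
  have hmem_or : ∀ Φ : Finset H, Φ ∪ Φ.image c = Finset.univ → ∀ τ, τ ∈ Φ ∨ c τ ∈ Φ := by
    intro Φ hu τ
    have : τ ∈ Φ ∪ Φ.image c := hu ▸ Finset.mem_univ τ
    rcases Finset.mem_union.mp this with h | h
    · exact Or.inl h
    · obtain ⟨b, hb, rfl⟩ := Finset.mem_image.mp h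
      rw [hinv]; exact Or.inr hb
  have hins : ∀ (φ : Finset H) (a : H), φ ∩ φ.image c = ∅ → a ∉ φ.image c →
      (insert a φ) ∩ ((insert a φ).image c) = ∅ := by
    intro φ a hφ h2
    rw [Finset.image_insert, Finset.eq_empty_iff_forall_notMem]
    intro b hb
    rw [Finset.mem_inter, Finset.mem_insert, Finset.mem_insert] at hb
    obtain ⟨h3 | h3, h4 | h4⟩ := hb
    · rw [h3] at h4; exact hfree a h4.symm
    · rw [h3] at h4; exact h2 h4
    · exact h2 (Finset.mem_image.mpr ⟨b, h3, by rw [h4, hinv]⟩)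
    · have : b ∈ φ ∩ φ.image c := Finset.mem_inter.mpr ⟨h3, h4⟩
      simp [hφ] at this
  have hex : ∀ φ : Finset H, φ ∩ φ.image c = ∅ → φ.card < g →
      ∃ τ₀, τ₀ ∉ φ ∧ τ₀ ∉ φ.image c ∧ c τ₀ ∉ φ ∧ c τ₀ ∉ φ.image c ∧ τ₀ ≠ c τ₀ := by
    intro φ hφ hlt
    have hcardU : (φ ∪ φ.image c).card = φ.card + φ.card := by
      rw [Finset.card_union_of_disjoint (Finset.disjoint_iff_inter_eq_empty.mpr hφ),
        Finset.card_image_of_injective _ hcinj]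
    have hpos : 0 < (φ ∪ φ.image c)ᶜ.card := by
      rw [Finset.card_compl, hcard]
      omega
    obtain ⟨τ₀, hτ₀⟩ := Finset.card_pos.mp hpos
    rw [Finset.mem_compl, Finset.mem_union, not_or] at hτ₀
    obtain ⟨h1, h2⟩ := hτ₀
    refine ⟨τ₀, h1, h2, ?_, ?_, fun h => hfree τ₀ h.symm⟩
    · intro h; exact h2 (Finset.mem_image.mpr ⟨c τ₀, h, hinv τ₀⟩)
    · intro h
      obtain ⟨b, hb, hbe⟩ := Finset.mem_image.mp h
      exact h1 (hcinj hbe ▸ hb)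
  have hsplitlem : ∀ (φ : Finset H) (τ₀ : H),
      Finset.univ.filter (fun Φ : Finset H =>
          (Φ ∩ Φ.image c = ∅ ∧ Φ ∪ Φ.image c = Finset.univ) ∧ φ ⊆ Φ)
      = Finset.univ.filter (fun Φ : Finset H =>
          (Φ ∩ Φ.image c = ∅ ∧ Φ ∪ Φ.image c = Finset.univ) ∧ insert τ₀ φ ⊆ Φ)
        ∪ Finset.univ.filter (fun Φ : Finset H =>
          (Φ ∩ Φ.image c = ∅ ∧ Φ ∪ Φ.image c = Finset.univ) ∧ insert (c τ₀) φ ⊆ Φ) := by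
    intro φ τ₀
    ext Φ
    simp only [Finset.mem_filter, Finset.mem_union, Finset.mem_univ, true_and,
      Finset.insert_subset_iff]
    constructor
    · rintro ⟨hCM, hsub⟩
      rcases hmem_or Φ hCM.2 τ₀ with h | h
      · exact Or.inl ⟨hCM, h, hsub⟩
      · exact Or.inr ⟨hCM, h, hsub⟩
    · rintro (⟨hCM, -, hsub⟩ | ⟨hCM, -, hsub⟩) <;> exact ⟨hCM, hsub⟩
  have hdisjlem : ∀ (φ : Finset H) (τ₀ : H),
      Disjoint (Finset.univ.filter (fun Φ : Finset H =>
          (Φ ∩ Φ.image c = ∅ ∧ Φ ∪ Φ.image c = Finset.univ) ∧ insert τ₀ φ ⊆ Φ))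
        (Finset.univ.filter (fun Φ : Finset H =>
          (Φ ∩ Φ.image c = ∅ ∧ Φ ∪ Φ.image c = Finset.univ) ∧ insert (c τ₀) φ ⊆ Φ)) := by
    intro φ τ₀
    rw [Finset.disjoint_left]
    rintro Φ hm1 hm2
    simp only [Finset.mem_filter, Finset.mem_univ, true_and, Finset.insert_subset_iff] at hm1 hm2
    have : τ₀ ∈ Φ ∩ Φ.image c :=
      Finset.mem_inter.mpr ⟨hm1.2.1, Finset.mem_image.mpr ⟨c τ₀, hm2.2.1, hinv τ₀⟩⟩
    simp [hm1.1.1] at this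
  intro k hk1
  induction k, hk1 using Nat.le_induction with
  | base =>
    intro φ hφ hk Φ₁ hΦ₁
    have hlt : φ.card < g := by omega
    obtain ⟨τ₀, h1, h2, h3, h4, h5⟩ := hex φ hφ hlt
    have hgcard : φ.card + 1 = g := by omega
    have hφ' := hins φ τ₀ hφ h2
    have hφ'' := hins φ (c τ₀) hφ h4
    have hcard' : (insert τ₀ φ).card = g := by
      rw [Finset.card_insert_of_notMem h1]; omega
    have hcard'' : (insert (c τ₀) φ).card = g := by
      rw [Finset.card_insert_of_notMem h3]; omega
    have hU : ∀ ψ : Finset H, ψ ∩ ψ.image c = ∅ → ψ.card = g →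
        ψ ∪ ψ.image c = Finset.univ := by
      intro ψ hi hcg
      apply Finset.eq_univ_of_card
      rw [Finset.card_union_of_disjoint (Finset.disjoint_iff_inter_eq_empty.mpr hi),
        Finset.card_image_of_injective _ hcinj, hcard, hcg]
      omega
    have hU' := hU _ hφ' hcard'
    have hU'' := hU _ hφ'' hcard''
    have hset : Finset.univ.filter (fun Φ : Finset H =>
          (Φ ∩ Φ.image c = ∅ ∧ Φ ∪ Φ.image c = Finset.univ) ∧ φ ⊆ Φ)
        = {insert τ₀ φ, insert (c τ₀) φ} := by
      ext Φ
      simp only [Finset.mem_filter, Finset.mem_univ, true_and, Finset.mem_insert,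
        Finset.mem_singleton]
      constructor
      · rintro ⟨hCM, hsub⟩
        have hΦg : Φ.card = g := hCMcard Φ hCM.1 hCM.2
        rcases hmem_or Φ hCM.2 τ₀ with h | h
        · left
          refine (Finset.eq_of_subset_of_card_le (Finset.insert_subset h hsub) ?_).symm
          rw [hΦg, hcard']
        · right
          refine (Finset.eq_of_subset_of_card_le (Finset.insert_subset h hsub) ?_).symm
          rw [hΦg, hcard'']
      · rintro (rfl | rfl)
        · exact ⟨⟨hφ', hU'⟩, Finset.subset_insert _ _⟩
        · exact ⟨⟨hφ'', hU''⟩, Finset.subset_insert _ _⟩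
    have hne' : insert τ₀ φ ≠ insert (c τ₀) φ := by
      intro h
      have : τ₀ ∈ insert (c τ₀) φ := h ▸ Finset.mem_insert_self τ₀ φ
      rcases Finset.mem_insert.mp this with h' | h'
      · exact h5 h'
      · exact h1 h'
    have hP : ∏ τ ∈ Φ₁, (x τ - x (c τ)) ^ 2
        = (x τ₀ - x (c τ₀)) ^ 2 * ∏ τ ∈ φ, (x τ - x (c τ)) ^ 2 := by
      rw [prod_transversal c hinv _ (fun τ => by rw [hinv]; ring) hΦ₁.1 hφ'
        (hΦ₁.2.trans hU'.symm), Finset.prod_insert h1]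
    have hUeq : (Finset.univ : Finset H) = insert τ₀ (insert (c τ₀) (φ ∪ φ.image c)) := by
      rw [← hU', Finset.image_insert, Finset.insert_union, Finset.union_insert]
    have hd : Disjoint φ (φ.image c) := Finset.disjoint_iff_inter_eq_empty.mpr hφ
    have hnmU : τ₀ ∉ φ ∪ φ.image c := by
      rw [Finset.mem_union]; exact fun h => h.elim h1 h2
    have hnmU' : c τ₀ ∉ φ ∪ φ.image c := by
      rw [Finset.mem_union]; exact fun h => h.elim h3 h4
    have hA : τ₀ ∉ insert (c τ₀) (φ ∪ φ.image c) := by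
      rw [Finset.mem_insert]; exact fun h => h.elim h5 hnmU
    rw [hset, Finset.prod_pair hne', hUeq, hP,
      discProd_insert x hA, discProd_insert x hnmU', Finset.prod_insert hnmU',
      Finset.prod_union hd, Finset.prod_union hd,
      discProd_insert x h1, Finset.image_insert, discProd_insert x h4,
      discProd_insert x h3, Finset.image_insert, hinv, discProd_insert x h2]
    simp only [Nat.sub_self, pow_zero, pow_one]
    ring
  | succ k hk1' ih =>
    intro φ hφ hk Φ₁ hΦ₁
    have hlt : φ.card < g := by omega
    obtain ⟨τ₀, h1, h2, h3, h4, h5⟩ := hex φ hφ hlt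
    have hφ' := hins φ τ₀ hφ h2
    have hφ'' := hins φ (c τ₀) hφ h4
    have hk' : k = g - (insert τ₀ φ).card := by
      rw [Finset.card_insert_of_notMem h1]; omega
    have hk'' : k = g - (insert (c τ₀) φ).card := by
      rw [Finset.card_insert_of_notMem h3]; omega
    have eq1 := ih (insert τ₀ φ) hφ' hk' Φ₁ hΦ₁
    have eq2 := ih (insert (c τ₀) φ) hφ'' hk'' Φ₁ hΦ₁
    have hd : Disjoint φ (φ.image c) := Finset.disjoint_iff_inter_eq_empty.mpr hφ
    have hnmU : τ₀ ∉ φ ∪ φ.image c := by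
      rw [Finset.mem_union]; exact fun h => h.elim h1 h2
    have hnmU' : c τ₀ ∉ φ ∪ φ.image c := by
      rw [Finset.mem_union]; exact fun h => h.elim h3 h4
    have hA : τ₀ ∉ insert (c τ₀) (φ ∪ φ.image c) := by
      rw [Finset.mem_insert]; exact fun h => h.elim h5 hnmU
    have hB : c τ₀ ∉ insert τ₀ (φ ∪ φ.image c) := by
      rw [Finset.mem_insert]; exact fun h => h.elim (fun h' => h5 h'.symm) hnmU'
    have hT' : insert τ₀ φ ∪ (insert τ₀ φ).image c
        = insert τ₀ (insert (c τ₀) (φ ∪ φ.image c)) := by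
      rw [Finset.image_insert, Finset.insert_union, Finset.union_insert]
    have hT'' : insert (c τ₀) φ ∪ (insert (c τ₀) φ).image c
        = insert (c τ₀) (insert τ₀ (φ ∪ φ.image c)) := by
      rw [Finset.image_insert, hinv, Finset.insert_union, Finset.union_insert]
    rw [hT', discProd_insert x hA, discProd_insert x hnmU', Finset.prod_insert hnmU',
      Finset.prod_union hd, Finset.prod_union hd,
      discProd_insert x h1, Finset.image_insert, discProd_insert x h4,
      Finset.prod_insert h1] at eq1
    rw [hT'', discProd_insert x hB, discProd_insert x hnmU, Finset.prod_insert hnmU,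
      Finset.prod_union hd, Finset.prod_union hd,
      discProd_insert x h3, Finset.image_insert, hinv, discProd_insert x h2,
      Finset.prod_insert h3, hinv] at eq2
    rw [hsplitlem φ τ₀, Finset.prod_union (hdisjlem φ τ₀)]
    have hpow2 : (2:ℕ)^(k+1) = 2^(k-1) * 2 * 2 := by
      rw [← pow_succ, ← pow_succ]; congr 1; omega
    have hpow1 : (2:ℕ)^k = 2^(k-1) * 2 := by
      rw [← pow_succ]; congr 1; omega
    rw [Nat.add_sub_cancel, hpow2, hpow1]
    rw [hpow1] at eq1 eq2
    have hAne : (∏ b ∈ φ, (x τ₀ - x b) ^ 2) ≠ 0 :=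
      Finset.prod_ne_zero_iff.mpr fun b hb => pow_ne_zero 2 (hx τ₀ b fun e => h1 (e ▸ hb))
    have hBne : (∏ b ∈ φ.image c, (x τ₀ - x b) ^ 2) ≠ 0 :=
      Finset.prod_ne_zero_iff.mpr fun b hb => pow_ne_zero 2 (hx τ₀ b fun e => h2 (e ▸ hb))
    have hA'ne : (∏ b ∈ φ, (x (c τ₀) - x b) ^ 2) ≠ 0 :=
      Finset.prod_ne_zero_iff.mpr fun b hb => pow_ne_zero 2 (hx (c τ₀) b fun e => h3 (e ▸ hb))
    have hB'ne : (∏ b ∈ φ.image c, (x (c τ₀) - x b) ^ 2) ≠ 0 :=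
      Finset.prod_ne_zero_iff.mpr fun b hb => pow_ne_zero 2 (hx (c τ₀) b fun e => h4 (e ▸ hb))
    have hdne : (x τ₀ - x (c τ₀)) ^ 2 ≠ 0 := pow_ne_zero 2 (hx _ _ h5)
    have hflip : (x (c τ₀) - x τ₀) ^ 2 = (x τ₀ - x (c τ₀)) ^ 2 := by ring
    rw [hflip] at eq2
    obtain ⟨d2, hd2⟩ : ∃ d2', (x τ₀ - x (c τ₀)) ^ 2 = d2' := ⟨_, rfl⟩
    have hd2ne : d2 ≠ 0 := hd2 ▸ hdne
    rw [hd2] at eq1 eq2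
    have hY : ((d2
        * ((∏ b ∈ φ, (x τ₀ - x b) ^ 2) * ∏ b ∈ φ.image c, (x τ₀ - x b) ^ 2)
        * ((∏ b ∈ φ, (x (c τ₀) - x b) ^ 2) * ∏ b ∈ φ.image c, (x (c τ₀) - x b) ^ 2))
          ^ (2 ^ (k - 1) * 2)) ≠ 0 :=
      pow_ne_zero _ (mul_ne_zero (mul_ne_zero hd2ne (mul_ne_zero hAne hBne))
        (mul_ne_zero hA'ne hB'ne))
    apply mul_right_cancel₀ hY
    have eq3 := congrArg₂ (· * ·) eq1 eq2
    simp only at eq3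
    linear_combination eq3

theorem discriminant_product_identity {H : Type*} [Fintype H] [DecidableEq H]
    {R : Type*} [CommRing R]
    (g : ℕ) (hcard : Fintype.card H = 2 * g)
    (c : H → H) (hinv : ∀ τ, c (c τ) = τ) (hfree : ∀ τ, c τ ≠ τ)
    (x : H → R)
    (φ : Finset H) (hφ : φ ∩ φ.image c = ∅)
    (k : ℕ) (hk : k = g - φ.card) (hk1 : 1 ≤ k)
    (Φ₁ : Finset H) (hΦ₁ : Φ₁ ∩ Φ₁.image c = ∅ ∧ Φ₁ ∪ Φ₁.image c = Finset.univ) :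
    (∏ Φ ∈ Finset.univ.filter (fun Φ : Finset H =>
          (Φ ∩ Φ.image c = ∅ ∧ Φ ∪ Φ.image c = Finset.univ) ∧ φ ⊆ Φ),
        discProd x Φ * discProd x (Φ.image c))
      * (∏ τ ∈ Φ₁, (x τ - x (c τ)) ^ 2) ^ (2 ^ (k - 1))
      * (discProd x (φ ∪ φ.image c)) ^ (2 ^ (k - 1))
    = (discProd x Finset.univ) ^ (2 ^ (k - 1))
      * (∏ τ ∈ φ, (x τ - x (c τ)) ^ 2) ^ (2 ^ (k - 1))
      * (discProd x φ * discProd x (φ.image c)) ^ (2 ^ k) := by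
  have hX : ∀ τ τ' : H, τ ≠ τ' →
      (MvPolynomial.X τ : MvPolynomial H ℤ) - MvPolynomial.X τ' ≠ 0 := by
    intro τ τ' hne h
    exact hne (MvPolynomial.X_injective (sub_eq_zero.mp h))
  have hkey := key g hcard c hinv hfree (MvPolynomial.X : H → MvPolynomial H ℤ) hX
    k hk1 φ hφ hk Φ₁ hΦ₁
  have := congrArg (MvPolynomial.aeval x : MvPolynomial H ℤ →ₐ[ℤ] R) hkey
  simpa only [map_mul, map_pow, map_prod, map_sub, map_discProd', MvPolynomial.aeval_X]
    using this
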